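/- With R = V ⊗ |⊥⟩⟨⊤| + V† ⊗ |⊤⟩⟨⊥| and P_± = (I ± R)/2 on H ⊗ ℂ², for any unit vector φ ∈ H: measuring the state φ ⊗ |⊤⟩ with the projective measurement {P_⊤, P_⊥} followed by the projective measurement onto the second factor basis {|⊤⟩, |⊥⟩} yields the state (Vφ) ⊗ |⊥⟩ with probability 1/2 and the state φ ⊗ |⊤⟩ with probability 1/2. -/

import Mathlib

open Matrix Kronecker

/-- With `R = V ⊗ |⊥⟩⟨⊤| + Vᴴ ⊗ |⊤⟩⟨⊥|` and `P± = (1 ± R)/2` on `H ⊗ ℂ²`,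
measuring `φ ⊗ |⊤⟩` (for a unit vector `φ`) with `{P⊤, P⊥}` followed by the projective
measurement `{1 ⊗ |⊤⟩⟨⊤|, 1 ⊗ |⊥⟩⟨⊥|}` on the second factor yields, whatever the first
outcome (each of probability `1/2`), the state `(Vφ) ⊗ |⊥⟩` with conditional probability
`1/2` (up to a global phase — exactly for the first branch), and the state `φ ⊗ |⊤⟩` with
conditional probability `1/2` (exactly). Here `|⊤⟩ = e₀`, `|⊥⟩ = e₁`. -/
theorem measurement_based_unitary_step {ι : Type*} [Fintype ι] [DecidableEq ι]
    (V : Matrix ι ι ℂ) (hV : V ∈ Matrix.unitaryGroup ι ℂ)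
    (φ : ι → ℂ) (hφ : star φ ⬝ᵥ φ = 1) :
    let ketT : Fin 2 → ℂ := fun k => if k = 0 then 1 else 0
    let ketB : Fin 2 → ℂ := fun k => if k = 1 then 1 else 0
    let R : Matrix (ι × Fin 2) (ι × Fin 2) ℂ :=
      V ⊗ₖ Matrix.single (1 : Fin 2) (0 : Fin 2) (1 : ℂ) +
      Vᴴ ⊗ₖ Matrix.single (0 : Fin 2) (1 : Fin 2) (1 : ℂ)
    let Pt : Matrix (ι × Fin 2) (ι × Fin 2) ℂ := ((1 : ℂ) / 2) • (1 + R)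
    let Pb : Matrix (ι × Fin 2) (ι × Fin 2) ℂ := ((1 : ℂ) / 2) • (1 - R)
    let Qt : Matrix (ι × Fin 2) (ι × Fin 2) ℂ :=
      (1 : Matrix ι ι ℂ) ⊗ₖ Matrix.single (0 : Fin 2) (0 : Fin 2) (1 : ℂ)
    let Qb : Matrix (ι × Fin 2) (ι × Fin 2) ℂ :=
      (1 : Matrix ι ι ℂ) ⊗ₖ Matrix.single (1 : Fin 2) (1 : Fin 2) (1 : ℂ)
    let ψ : ι × Fin 2 → ℂ := fun p => φ p.1 * ketT p.2
    let target : ι × Fin 2 → ℂ := fun p => V.mulVec φ p.1 * ketB p.2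
    -- first measurement: each outcome has probability 1/2
    (star ψ ⬝ᵥ Pt.mulVec ψ = 1 / 2) ∧ (star ψ ⬝ᵥ Pb.mulVec ψ = 1 / 2) ∧
    -- in each branch, normalized post-measurement states, second-stage probabilities and
    -- final states
    (∀ P ∈ ({Pt, Pb} : Set (Matrix (ι × Fin 2) (ι × Fin 2) ℂ)),
      let post : ι × Fin 2 → ℂ := (↑(Real.sqrt (1 / 2)) : ℂ)⁻¹ • P.mulVec ψ
      -- conditional probabilities of the second measurement are 1/2 each
      (star post ⬝ᵥ Qt.mulVec post = 1 / 2) ∧ (star post ⬝ᵥ Qb.mulVec post = 1 / 2) ∧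
      -- second outcome ⊤: the (normalized) final state is exactly φ ⊗ |⊤⟩
      ((↑(Real.sqrt (1 / 2)) : ℂ)⁻¹ • Qt.mulVec post = ψ) ∧
      -- second outcome ⊥: the (normalized) final state is (Vφ) ⊗ |⊥⟩ up to a global phase
      (∃ c : ℂ, ‖c‖ = 1 ∧ (↑(Real.sqrt (1 / 2)) : ℂ)⁻¹ • Qb.mulVec post = c • target)) ∧
    -- and for the first branch (first outcome ⊤) the ⊥-final state is exactly (Vφ) ⊗ |⊥⟩
    ((↑(Real.sqrt (1 / 2)) : ℂ)⁻¹ • Qb.mulVec ((↑(Real.sqrt (1 / 2)) : ℂ)⁻¹ • Pt.mulVec ψ)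
      = target) := by
  intro ketT ketB R Pt Pb Qt Qb ψ target
  set s : ℂ := (↑(Real.sqrt (1 / 2)) : ℂ) with hs_def
  have hss : s * s = 1 / 2 := by
    rw [hs_def, ← Complex.ofReal_mul, Real.mul_self_sqrt (by norm_num)]
    norm_num
  have hsinv : s⁻¹ * s⁻¹ = 2 := by
    rw [← mul_inv, hss]
    norm_num
  have hstar_sinv : star s⁻¹ = s⁻¹ := by
    rw [hs_def, ← Complex.ofReal_inv, Complex.star_def, Complex.conj_ofReal]
  -- key pointwise identities
  have hRψ : R.mulVec ψ = target := by
    funext p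
    obtain ⟨i, a⟩ := p
    simp only [R, ψ, target, ketT, ketB, mulVec, dotProduct, Fintype.sum_prod_type,
      Matrix.add_apply, Matrix.kroneckerMap_apply, Matrix.single, Matrix.of_apply,
      Fin.sum_univ_two]
    fin_cases a <;> simp [mulVec, dotProduct]
  have hQtψ : Qt.mulVec ψ = ψ := by
    funext p
    obtain ⟨i, a⟩ := p
    simp only [Qt, ψ, ketT, mulVec, dotProduct, Fintype.sum_prod_type,
      Matrix.kroneckerMap_apply, Matrix.single, Matrix.of_apply, Fin.sum_univ_two,
      Matrix.one_apply]
    fin_cases a <;> simp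
  have hQtt : Qt.mulVec target = 0 := by
    funext p
    obtain ⟨i, a⟩ := p
    simp only [Qt, target, ketB, mulVec, dotProduct, Fintype.sum_prod_type,
      Matrix.kroneckerMap_apply, Matrix.single, Matrix.of_apply, Fin.sum_univ_two,
      Matrix.one_apply]
    fin_cases a <;> simp
  have hQbψ : Qb.mulVec ψ = 0 := by
    funext p
    obtain ⟨i, a⟩ := p
    simp only [Qb, ψ, ketT, mulVec, dotProduct, Fintype.sum_prod_type,
      Matrix.kroneckerMap_apply, Matrix.single, Matrix.of_apply, Fin.sum_univ_two,
      Matrix.one_apply]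
    fin_cases a <;> simp
  have hQbt : Qb.mulVec target = target := by
    funext p
    obtain ⟨i, a⟩ := p
    simp only [Qb, target, ketB, mulVec, dotProduct, Fintype.sum_prod_type,
      Matrix.kroneckerMap_apply, Matrix.single, Matrix.of_apply, Fin.sum_univ_two,
      Matrix.one_apply]
    fin_cases a <;> simp
  -- inner products
  have hVφ : star (V.mulVec φ) ⬝ᵥ V.mulVec φ = 1 := by
    rw [star_mulVec, Matrix.dotProduct_mulVec, Matrix.vecMul_vecMul,
      ← Matrix.star_eq_conjTranspose, (Matrix.mem_unitaryGroup_iff'.mp hV), Matrix.vecMul_one,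
      hφ]
  have hψψ : star ψ ⬝ᵥ ψ = 1 := by
    simp only [ψ, ketT, dotProduct, Fintype.sum_prod_type, Fin.sum_univ_two, Pi.star_apply]
    simpa [dotProduct] using hφ
  have htt : star target ⬝ᵥ target = 1 := by
    simp only [target, ketB, dotProduct, Fintype.sum_prod_type, Fin.sum_univ_two, Pi.star_apply]
    simpa [dotProduct] using hVφ
  have hψt : star ψ ⬝ᵥ target = 0 := by
    simp only [ψ, target, ketT, ketB, dotProduct, Fintype.sum_prod_type, Fin.sum_univ_two,
      Pi.star_apply]
    simp
  have htψ : star target ⬝ᵥ ψ = 0 := by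
    simp only [ψ, target, ketT, ketB, dotProduct, Fintype.sum_prod_type, Fin.sum_univ_two,
      Pi.star_apply]
    simp
  have hPtψ : Pt.mulVec ψ = ((1 : ℂ)/2) • (ψ + target) := by
    rw [show Pt.mulVec ψ = ((1:ℂ)/2) • ((1 + R).mulVec ψ) from Matrix.smul_mulVec _ _ _,
      Matrix.add_mulVec, Matrix.one_mulVec, hRψ]
  have hPbψ : Pb.mulVec ψ = ((1 : ℂ)/2) • (ψ - target) := by
    rw [show Pb.mulVec ψ = ((1:ℂ)/2) • ((1 - R).mulVec ψ) from Matrix.smul_mulVec _ _ _,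
      Matrix.sub_mulVec, Matrix.one_mulVec, hRψ]
  have hQt1 : Qt.mulVec (s⁻¹ • ((1:ℂ)/2) • (ψ + target)) = s⁻¹ • ((1:ℂ)/2) • ψ := by
    rw [Matrix.mulVec_smul, Matrix.mulVec_smul, Matrix.mulVec_add, hQtψ, hQtt, add_zero]
  have hQb1 : Qb.mulVec (s⁻¹ • ((1:ℂ)/2) • (ψ + target)) = s⁻¹ • ((1:ℂ)/2) • target := by
    rw [Matrix.mulVec_smul, Matrix.mulVec_smul, Matrix.mulVec_add, hQbψ, hQbt, zero_add]
  have hQt2 : Qt.mulVec (s⁻¹ • ((1:ℂ)/2) • (ψ - target)) = s⁻¹ • ((1:ℂ)/2) • ψ := by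
    rw [Matrix.mulVec_smul, Matrix.mulVec_smul, Matrix.mulVec_sub, hQtψ, hQtt, sub_zero]
  have hQb2 : Qb.mulVec (s⁻¹ • ((1:ℂ)/2) • (ψ - target)) = s⁻¹ • ((1:ℂ)/2) • (-target) := by
    rw [Matrix.mulVec_smul, Matrix.mulVec_smul, Matrix.mulVec_sub, hQbψ, hQbt, zero_sub,
      smul_neg, smul_neg]
  refine ⟨?_, ?_, ?_, ?_⟩
  · rw [hPtψ, dotProduct_smul, dotProduct_add, hψψ, hψt]
    norm_num
  · rw [hPbψ, dotProduct_smul, dotProduct_sub, hψψ, hψt]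
    norm_num
  · intro P hP
    simp only [Set.mem_insert_iff, Set.mem_singleton_iff] at hP
    rcases hP with rfl | rfl
    · intro post
      simp only [post, hPtψ]
      refine ⟨?_, ?_, ?_, 1, by norm_num, ?_⟩
      · rw [hQt1]
        simp only [star_smul, star_add, smul_dotProduct, dotProduct_smul, add_dotProduct,
          smul_eq_mul, hstar_sinv, star_div₀, star_one, star_ofNat, hψψ, htψ]
        linear_combination (1/4 : ℂ) * hsinv
      · rw [hQb1]
        simp only [star_smul, star_add, smul_dotProduct, dotProduct_smul, add_dotProduct,
          smul_eq_mul, hstar_sinv, star_div₀, star_one, star_ofNat, htt, hψt]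
        linear_combination (1/4 : ℂ) * hsinv
      · rw [hQt1, smul_smul, smul_smul, hsinv]
        norm_num
      · rw [hQb1, smul_smul, smul_smul, hsinv]
        norm_num
    · intro post
      simp only [post, hPbψ]
      refine ⟨?_, ?_, ?_, -1, by norm_num, ?_⟩
      · rw [hQt2]
        simp only [star_smul, star_sub, smul_dotProduct, dotProduct_smul, sub_dotProduct,
          smul_eq_mul, hstar_sinv, star_div₀, star_one, star_ofNat, hψψ, htψ]
        linear_combination (1/4 : ℂ) * hsinv
      · rw [hQb2]
        simp only [star_smul, star_sub, smul_dotProduct, dotProduct_smul, sub_dotProduct,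
          dotProduct_neg, smul_eq_mul, hstar_sinv, star_div₀, star_one, star_ofNat, htt, hψt]
        linear_combination (1/4 : ℂ) * hsinv
      · rw [hQt2, smul_smul, smul_smul, hsinv]
        norm_num
      · rw [hQb2, smul_smul, smul_smul, hsinv]
        norm_num
  · rw [hPtψ, hQb1, smul_smul, smul_smul, hsinv]
    norm_num
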